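/- Let n ≥ 1, char K ≠ 2, and let Λ = KQ/(KQ)_{≥2} be the truncated cyclic quiver algebra with n vertices, n odd. With μ̄ as above (μ̄(e_i)=e_{i+1}, μ̄(a_i)=-a_{i+1}) and η̄ the Nakayama automorphism given by η̄(e_i)=e_{i+1}, η̄(a_i)=a_{i+1}, the smallest k ≥ 0 such that μ̄^{k+1}η̄^{-1} is an inner automorphism of Λ is k = n. -/

import Mathlib

/-- for the truncated cyclic quiver algebra `Λ` with `n` odd vertices over
a field of characteristic `≠ 2`, with `μ̄(e_i)=e_{i+1}`, `μ̄(a_i)=-a_{i+1}` and the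
Nakayama automorphism `η̄(e_i)=e_{i+1}`, `η̄(a_i)=a_{i+1}`, the smallest `k ≥ 0` such
that `μ̄^{k+1} ∘ η̄⁻¹` is inner is `k = n`. -/
theorem stmt_17 (K : Type*) [Field K] (n : ℕ) [NeZero n] (hn : 1 ≤ n) (hnodd : Odd n)
    (hchar : ringChar K ≠ 2)
    (Λ : Type*) [Ring Λ] [Algebra K Λ]
    (e a : ZMod n → Λ)
    (bas : Module.Basis (ZMod n ⊕ ZMod n) K Λ)
    (hbas : ∀ i, bas (Sum.inl i) = e i ∧ bas (Sum.inr i) = a i)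
    (hee : ∀ i j, e i * e j = if i = j then e i else 0)
    (hea : ∀ i j, e i * a j = if i = j then a j else 0)
    (hae : ∀ i j, a i * e j = if j = i + 1 then a i else 0)
    (haa : ∀ i j, a i * a j = 0)
    (hone : (∑ i, e i) = 1)
    (μbar ηbar : Λ ≃ₐ[K] Λ)
    (hμe : ∀ i, μbar (e i) = e (i + 1))
    (hμa : ∀ i, μbar (a i) = -(a (i + 1)))
    (hηe : ∀ i, ηbar (e i) = e (i + 1))
    (hηa : ∀ i, ηbar (a i) = a (i + 1)) :
    IsLeast {k : ℕ | ∃ u : Λˣ, ∀ y : Λ,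
        (μbar ^ (k + 1) * ηbar⁻¹) y = (u : Λ) * y * ((u⁻¹ : Λˣ) : Λ)} n := by
  have he : ∀ i, bas (Sum.inl i) = e i := fun i => (hbas i).1
  have ha : ∀ i, bas (Sum.inr i) = a i := fun i => (hbas i).2
  have hre : ∀ i, bas.repr (e i) = Finsupp.single (Sum.inl i) 1 := by
    intro i; rw [← he i, bas.repr_self]
  have hra : ∀ i, bas.repr (a i) = Finsupp.single (Sum.inr i) 1 := by
    intro i; rw [← ha i, bas.repr_self]
  -- expansion of any element in the basis
  have hx : ∀ x : Λ, x = (∑ i, bas.repr x (Sum.inl i) • e i)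
      + ∑ i, bas.repr x (Sum.inr i) • a i := by
    intro x
    conv_lhs => rw [← bas.sum_repr x]
    rw [Fintype.sum_sum_type]
    simp only [he, ha]
  -- automorphism powers on the basis
  have μe : ∀ (m : ℕ) (i), (μbar ^ m) (e i) = e (i + m) := by
    intro m
    induction m with
    | zero => intro i; simp
    | succ m ih =>
        intro i
        rw [pow_succ]
        show (μbar ^ m) (μbar (e i)) = _
        rw [hμe, ih]
        congr 1
        push_cast
        ring
  have μa : ∀ (m : ℕ) (i), (μbar ^ m) (a i) = (-1 : Λ) ^ m * a (i + m) := by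
    intro m
    induction m with
    | zero => intro i; simp
    | succ m ih =>
        intro i
        rw [pow_succ]
        show (μbar ^ m) (μbar (a i)) = _
        rw [hμa, map_neg, ih]
        rw [pow_succ]
        have : i + 1 + (m : ZMod n) = i + ((m : ℕ) + 1 : ℕ) := by push_cast; ring
        rw [this]
        simp [mul_neg, neg_mul]
  have ηie : ∀ i, ηbar⁻¹ (e i) = e (i - 1) := by
    intro i
    have : ηbar (e (i - 1)) = e i := by rw [hηe]; ring_nf
    rw [← this]
    exact ηbar.symm_apply_apply _
  have ηia : ∀ i, ηbar⁻¹ (a i) = a (i - 1) := by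
    intro i
    have : ηbar (a (i - 1)) = a i := by rw [hηa]; ring_nf
    rw [← this]
    exact ηbar.symm_apply_apply _
  -- multiplication expansion lemmas
  have mulE : ∀ (x : Λ) (j), x * e j =
      bas.repr x (Sum.inl j) • e j + bas.repr x (Sum.inr (j - 1)) • a (j - 1) := by
    intro x j
    conv_lhs => rw [hx x]
    rw [add_mul, Finset.sum_mul, Finset.sum_mul]
    simp only [smul_mul_assoc, hee, hae, smul_ite, smul_zero]
    simp only [show ∀ i : ZMod n, (j = i + 1) = (i = j - 1) from fun i =>
      propext (by rw [eq_sub_iff_add_eq, eq_comm])]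
    simp [Finset.sum_ite_eq']
  have eMul : ∀ (x : Λ) (j), e j * x =
      bas.repr x (Sum.inl j) • e j + bas.repr x (Sum.inr j) • a j := by
    intro x j
    conv_lhs => rw [hx x]
    rw [mul_add, Finset.mul_sum, Finset.mul_sum]
    simp only [mul_smul_comm, hee, hea, smul_ite, smul_zero]
    simp [Finset.sum_ite_eq]
  have mulA : ∀ (x : Λ) (j), x * a j = bas.repr x (Sum.inl j) • a j := by
    intro x j
    conv_lhs => rw [hx x]
    rw [add_mul, Finset.sum_mul, Finset.sum_mul]
    simp only [smul_mul_assoc, hea, haa, smul_ite, smul_zero]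
    simp [Finset.sum_ite_eq']
  have aMul : ∀ (x : Λ) (j), a j * x = bas.repr x (Sum.inl (j + 1)) • a j := by
    intro x j
    conv_lhs => rw [hx x]
    rw [mul_add, Finset.mul_sum, Finset.mul_sum]
    simp only [mul_smul_comm, hae, haa, smul_ite, smul_zero]
    simp [Finset.sum_ite_eq]
  constructor
  · -- membership : k = n works with u = 1
    refine ⟨1, fun y => ?_⟩
    have k1 : ∀ i, (μbar ^ (n + 1) * ηbar⁻¹) (e i) = e i := by
      intro i
      show (μbar ^ (n + 1)) (ηbar⁻¹ (e i)) = e i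
      rw [ηie, μe]
      congr 1
      push_cast
      simp [ZMod.natCast_self]
    have k2 : ∀ i, (μbar ^ (n + 1) * ηbar⁻¹) (a i) = a i := by
      intro i
      show (μbar ^ (n + 1)) (ηbar⁻¹ (a i)) = a i
      rw [ηia, μa, (hnodd.add_one).neg_one_pow, one_mul]
      congr 1
      push_cast
      simp [ZMod.natCast_self]
    have key : (μbar ^ (n + 1) * ηbar⁻¹) y = y := by
      conv_lhs => rw [hx y]
      rw [map_add, map_sum, map_sum]
      simp only [map_smul, k1, k2]
      exact (hx y).symm
    simp [key]
  · -- lower bound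
    intro k hk
    by_contra hlt
    push_neg at hlt
    obtain ⟨u, hu⟩ := hk
    -- compute the automorphism on the basis
    have φe : ∀ j, e (j + (k : ZMod n)) = (u : Λ) * e j * ((u⁻¹ : Λˣ) : Λ) := by
      intro j
      have h := hu (e j)
      rw [show (μbar ^ (k + 1) * ηbar⁻¹) (e j) = (μbar ^ (k + 1)) (ηbar⁻¹ (e j)) from rfl,
        ηie, μe] at h
      rw [← h]
      congr 1
      push_cast
      ring
    have φa : ∀ j, (-1 : Λ) ^ (k + 1) * a (j + (k : ZMod n))
        = (u : Λ) * a j * ((u⁻¹ : Λˣ) : Λ) := by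
      intro j
      have h := hu (a j)
      rw [show (μbar ^ (k + 1) * ηbar⁻¹) (a j) = (μbar ^ (k + 1)) (ηbar⁻¹ (a j)) from rfl,
        ηia, μa] at h
      rw [← h]
      congr 2
      push_cast
      ring
    have he' : ∀ j, e (j + (k : ZMod n)) * (u : Λ) = (u : Λ) * e j := by
      intro j
      have := congrArg (· * (u : Λ)) (φe j)
      simpa [mul_assoc, Units.inv_mul] using this
    have ha' : ∀ j, (-1 : Λ) ^ (k + 1) * (a (j + (k : ZMod n)) * (u : Λ)) = (u : Λ) * a j := by
      intro j
      have := congrArg (· * (u : Λ)) (φa j)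
      simpa [mul_assoc, Units.inv_mul] using this
    -- in all cases, the `e`-coordinates of `u` vanish
    have hc : ∀ j, bas.repr (u : Λ) (Sum.inl j) = 0 := by
      by_cases hk0 : (k : ZMod n) = 0
      · -- k = 0
        have hdvd : n ∣ k := (ZMod.natCast_eq_zero_iff k n).mp hk0
        have hk0' : k = 0 := Nat.eq_zero_of_dvd_of_lt hdvd hlt
        subst hk0'
        -- chain relation c (j+1) = - c j
        have hchain : ∀ j, bas.repr (u : Λ) (Sum.inl j)
            = - bas.repr (u : Λ) (Sum.inl (j + 1)) := by
          intro j
          have h := ha' j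
          simp only [Nat.cast_zero, add_zero, pow_one, neg_one_mul] at h
          rw [aMul (u : Λ) j, mulA (u : Λ) j] at h
          have h2 := congrArg (fun z => bas.repr z (Sum.inr j)) h
          simpa [hra, Finsupp.single_apply] using h2.symm
        have hpow : ∀ m : ℕ, bas.repr (u : Λ) (Sum.inl ((m : ZMod n)))
            = (-1 : K) ^ m * bas.repr (u : Λ) (Sum.inl 0) := by
          intro m
          induction m with
          | zero => simp
          | succ m ih =>
              push_cast
              have h := hchain (m : ZMod n)
              rw [ih] at h
              linear_combination h
        have h0 : bas.repr (u : Λ) (Sum.inl 0) = 0 := by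
          have := hpow n
          rw [ZMod.natCast_self, hnodd.neg_one_pow, neg_one_mul] at this
          have h2 : (2 : K) * bas.repr (u : Λ) (Sum.inl 0) = 0 := by
            linear_combination this
          rcases mul_eq_zero.mp h2 with h | h
          · exact absurd h (Ring.two_ne_zero hchar)
          · exact h
        intro j
        have := hpow j.val
        rw [ZMod.natCast_zmod_val, h0, mul_zero] at this
        exact this
      · -- k ≠ 0 in ZMod n
        intro j
        have h := he' j
        rw [eMul (u : Λ) (j + (k : ZMod n)), mulE (u : Λ) j] at h
        have h2 := congrArg (fun z => bas.repr z (Sum.inl j)) h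
        have hne : ¬ (j + (k : ZMod n) = j) := by
          intro hcontra
          apply hk0
          have h2 : j + (k : ZMod n) = j + 0 := by rw [add_zero]; exact hcontra
          exact add_left_cancel h2
        simpa [hre, hra, Finsupp.single_apply, hne] using h2.symm
    -- conclude : u * u⁻¹ = 1 has vanishing e₀-coordinate, contradiction
    have hprod : ((u : Λ) * ((u⁻¹ : Λˣ) : Λ)) =
        ∑ i, bas.repr (u : Λ) (Sum.inr i) •
          (bas.repr ((u⁻¹ : Λˣ) : Λ) (Sum.inl (i + 1)) • a i) := by
      conv_lhs => rw [hx (u : Λ)]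
      rw [add_mul, Finset.sum_mul, Finset.sum_mul]
      simp [smul_mul_assoc, hc, aMul]
    have h1 : bas.repr ((u : Λ) * ((u⁻¹ : Λˣ) : Λ)) (Sum.inl 0) = 1 := by
      rw [Units.mul_inv, ← hone]
      simp [hre, Finsupp.single_apply]
    rw [hprod] at h1
    simp [hra, Finsupp.single_apply] at h1
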